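/- Functional equation for the Sylvester series: Let q be a complex number with |q| < 1 and let x be a complex number with x q^j ≠ 1 for every integer j ≥ 1. Define f(x) = ∑_{k=0}^∞ (−1)^k q^{k(3k+1)/2} x^k (1 − x q^{2k+1}) / ((q;q)_k · (x q^{k+1};q)_∞), which converges absolutely. Then f(x) = f(xq). -/

import Mathlib

open Filter

/-- The finite q-Pochhammer symbol `(a; q)_k = ∏_{i=0}^{k-1} (1 - a q^i)`. -/
noncomputable def qPoch (q a : ℂ) (k : ℕ) : ℂ := ∏ i ∈ Finset.range k, (1 - a * q ^ i)

/-- The infinite q-Pochhammer symbol `(a; q)_∞ = ∏_{i=0}^{∞} (1 - a q^i)`. -/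
noncomputable def qPochInf (q a : ℂ) : ℂ := ∏' i : ℕ, (1 - a * q ^ i)

/-- The summand `F_k(x)` of the Sylvester series. -/
noncomputable def F (q x : ℂ) (k : ℕ) : ℂ :=
  (-1) ^ k * q ^ (k * (3 * k + 1) / 2) * x ^ k * (1 - x * q ^ (2 * k + 1)) /
    (qPoch q q k * qPochInf q (x * q ^ (k + 1)))

/-- The Sylvester series `f(x)`. -/
noncomputable def sylvesterF (q x : ℂ) : ℂ := ∑' k : ℕ, F q x k

variable {q x : ℂ}

lemma summable_log (hq : ‖q‖ < 1) (a : ℂ) :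
    Summable (fun i : ℕ => Complex.log (1 - a * q ^ i)) := by
  have hgeo : Summable (fun i : ℕ => 3 / 2 * ‖a‖ * ‖q‖ ^ i) :=
    (summable_geometric_of_lt_one (norm_nonneg q) hq).mul_left _
  refine Summable.of_norm_bounded_eventually_nat hgeo ?_
  have h0 : Tendsto (fun i : ℕ => ‖a‖ * ‖q‖ ^ i) atTop (nhds 0) := by
    simpa using (tendsto_pow_atTop_nhds_zero_of_lt_one (norm_nonneg q) hq).const_mul ‖a‖
  filter_upwards [h0.eventually_le_const (by norm_num : (0:ℝ) < 1/2)] with i hi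
  have h1 : ‖-(a * q ^ i)‖ ≤ 1/2 := by
    rw [norm_neg, norm_mul, norm_pow]; exact hi
  have h2 := Complex.norm_log_one_add_half_le_self h1
  rw [show (1 : ℂ) + -(a * q ^ i) = 1 - a * q ^ i by ring] at h2
  calc ‖Complex.log (1 - a * q ^ i)‖ ≤ 3/2 * ‖-(a * q ^ i)‖ := h2
    _ = 3/2 * ‖a‖ * ‖q‖ ^ i := by rw [norm_neg, norm_mul, norm_pow]; ring

lemma multipliable_aux (hq : ‖q‖ < 1) (a : ℂ) (ha : ∀ i : ℕ, (1:ℂ) - a * q ^ i ≠ 0) :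
    Multipliable (fun i : ℕ => 1 - a * q ^ i) :=
  Complex.multipliable_of_summable_log (summable_log hq a)

lemma qPochInf_ne_zero (hq : ‖q‖ < 1) (a : ℂ) (ha : ∀ i : ℕ, (1:ℂ) - a * q ^ i ≠ 0) :
    qPochInf q a ≠ 0 := by
  have h2 := Complex.cexp_tsum_eq_tprod (f := fun i => 1 - a * q ^ i)
    (fun i => ha i) (summable_log hq a)
  rw [qPochInf, ← h2]
  exact Complex.exp_ne_zero _

lemma factor_ne (hx : ∀ j : ℕ, 1 ≤ j → x * q ^ j ≠ 1) (m i : ℕ) (hm : 1 ≤ m) :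
    (1 : ℂ) - x * q ^ m * q ^ i ≠ 0 := by
  rw [mul_assoc, ← pow_add]
  exact sub_ne_zero.mpr (Ne.symm (hx (m + i) (by omega)))

set_option maxHeartbeats 1000000 in
lemma tail_succ (hq : ‖q‖ < 1) (hx : ∀ j : ℕ, 1 ≤ j → x * q ^ j ≠ 1) (m : ℕ) (hm : 1 ≤ m) :
    qPochInf q (x * q ^ m) = (1 - x * q ^ m) * qPochInf q (x * q ^ (m + 1)) := by
  have key : ∀ i : ℕ, (1 : ℂ) - x * q ^ (m+1) * q ^ i = 1 - x * q ^ m * q ^ (i + 1) := by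
    intro i; ring
  have hmult : Multipliable (fun i : ℕ => (1:ℂ) - x * q ^ m * q ^ (i + 1)) :=
    (multipliable_aux hq _ (fun i => factor_ne hx (m+1) i (by omega))).congr key
  have ht : ∏' (i:ℕ), ((1:ℂ) - x * q ^ m * q ^ (i + 1)) = qPochInf q (x * q ^ (m+1)) :=
    (tprod_congr key).symm
  calc qPochInf q (x * q ^ m) = ∏' i : ℕ, (1 - x * q ^ m * q ^ i) := rfl
    _ = (1 - x * q ^ m * q ^ 0) * ∏' i : ℕ, (1 - x * q ^ m * q ^ (i + 1)) :=
        tprod_eq_zero_mul' hmult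
    _ = (1 - x * q ^ m) * qPochInf q (x * q ^ (m + 1)) := by rw [pow_zero, mul_one, ht]

set_option maxHeartbeats 1000000 in
lemma head_prod (hq : ‖q‖ < 1) (hx : ∀ j : ℕ, 1 ≤ j → x * q ^ j ≠ 1) (k : ℕ) :
    qPochInf q (x * q) = qPoch q (x * q) k * qPochInf q (x * q ^ (k + 1)) := by
  have key : ∀ i : ℕ, (1 : ℂ) - x * q ^ (k+1) * q ^ i = 1 - x * q * q ^ (i + k) := by
    intro i; ring
  have hmult : Multipliable (fun i : ℕ => (1:ℂ) - x * q * q ^ (i + k)) :=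
    (multipliable_aux hq _ (fun i => factor_ne hx (k+1) i (by omega))).congr key
  have ht : ∏' (i:ℕ), ((1:ℂ) - x * q * q ^ (i + k)) = qPochInf q (x * q ^ (k+1)) :=
    (tprod_congr key).symm
  calc qPochInf q (x * q) = ∏' i : ℕ, (1 - x * q * q ^ i) := rfl
    _ = (∏ i ∈ Finset.range k, (1 - x * q * q ^ i)) * ∏' i : ℕ, (1 - x * q * q ^ (i + k)) :=
        (hmult.prod_mul_tprod_nat_mul').symm
    _ = qPoch q (x * q) k * qPochInf q (x * q ^ (k + 1)) := by rw [ht]; rfl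

lemma norm_qPoch_q_ge (hq : ‖q‖ < 1) (k : ℕ) : (1 - ‖q‖) ^ k ≤ ‖qPoch q q k‖ := by
  rw [qPoch, norm_prod]
  rw [show (1 - ‖q‖) ^ k = ∏ _i ∈ Finset.range k, (1 - ‖q‖) by
    rw [Finset.prod_const, Finset.card_range]]
  apply Finset.prod_le_prod
  · intro i _; linarith
  · intro i _
    have h1 : ‖q * q ^ i‖ ≤ ‖q‖ := by
      rw [norm_mul, norm_pow]
      have : ‖q‖ ^ i ≤ 1 := pow_le_one₀ (norm_nonneg q) hq.le
      nlinarith [norm_nonneg q]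
    have h2 := norm_sub_norm_le (1 : ℂ) (q * q ^ i)
    rw [norm_one] at h2
    linarith

lemma qPoch_q_ne_zero (hq : ‖q‖ < 1) (k : ℕ) : qPoch q q k ≠ 0 := by
  have h := norm_qPoch_q_ge hq k
  have : (0:ℝ) < (1 - ‖q‖) ^ k := pow_pos (by linarith) k
  intro h0
  rw [h0, norm_zero] at h
  linarith

lemma norm_qPoch_xq_le (hq : ‖q‖ < 1) (k : ℕ) : ‖qPoch q (x * q) k‖ ≤ (1 + ‖x‖) ^ k := by
  rw [qPoch, norm_prod]
  rw [show (1 + ‖x‖) ^ k = ∏ _i ∈ Finset.range k, (1 + ‖x‖) by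
    rw [Finset.prod_const, Finset.card_range]]
  apply Finset.prod_le_prod (fun i _ => norm_nonneg _)
  intro i _
  calc ‖1 - x * q * q ^ i‖ ≤ ‖(1:ℂ)‖ + ‖x * q * q ^ i‖ := norm_sub_le _ _
    _ = 1 + ‖x‖ * (‖q‖ * ‖q‖ ^ i) := by rw [norm_one, norm_mul, norm_mul, norm_pow, mul_assoc]
    _ ≤ 1 + ‖x‖ := by
        have h1 : ‖q‖ ^ i ≤ 1 := pow_le_one₀ (norm_nonneg q) hq.le
        have h2 : ‖q‖ * ‖q‖ ^ i ≤ 1 := by nlinarith [norm_nonneg q, pow_nonneg (norm_nonneg q) i]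
        have h3 := mul_le_mul_of_nonneg_left h2 (norm_nonneg x)
        linarith

lemma norm_tail_ge (hq : ‖q‖ < 1) (hx : ∀ j : ℕ, 1 ≤ j → x * q ^ j ≠ 1) (m : ℕ) :
    ‖qPochInf q (x * q)‖ / (1 + ‖x‖) ^ m ≤ ‖qPochInf q (x * q ^ (m + 1))‖ := by
  have hXpos : (0:ℝ) < 1 + ‖x‖ := by positivity
  rw [div_le_iff₀ (by positivity)]
  calc ‖qPochInf q (x * q)‖ = ‖qPoch q (x * q) m‖ * ‖qPochInf q (x * q ^ (m + 1))‖ := by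
        rw [head_prod hq hx m, norm_mul]
    _ ≤ (1 + ‖x‖) ^ m * ‖qPochInf q (x * q ^ (m + 1))‖ := by
        gcongr; exact norm_qPoch_xq_le hq m
    _ = ‖qPochInf q (x * q ^ (m + 1))‖ * (1 + ‖x‖) ^ m := mul_comm _ _

lemma tail_ne_zero (hq : ‖q‖ < 1) (hx : ∀ j : ℕ, 1 ≤ j → x * q ^ j ≠ 1) (m : ℕ) (hm : 1 ≤ m) :
    qPochInf q (x * q ^ m) ≠ 0 :=
  qPochInf_ne_zero hq _ (fun i => factor_ne hx m i hm)

lemma norm_term_le (hq : ‖q‖ < 1) (hx : ∀ j : ℕ, 1 ≤ j → x * q ^ j ≠ 1)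
    (k m E : ℕ) (hE : k * k ≤ E) (hkm : k ≤ m) (hmk : m ≤ k + 1) (w : ℂ)
    (hw : ‖w‖ ≤ 2 * (1 + ‖x‖)) :
    ‖(-1 : ℂ) ^ k * q ^ E * x ^ k * w / (qPoch q q k * qPochInf q (x * q ^ (m + 1)))‖ ≤
      2 * (1 + ‖x‖) ^ 2 / ‖qPochInf q (x * q)‖ *
        (‖q‖ ^ (k * k) * (‖x‖ * (1 + ‖x‖) / (1 - ‖q‖)) ^ k) := by
  have hxq1 : ∀ i : ℕ, (1:ℂ) - x * q * q ^ i ≠ 0 := by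
    intro i
    have := factor_ne hx 1 i le_rfl
    rwa [pow_one] at this
  have hc : 0 < ‖qPochInf q (x * q)‖ :=
    norm_pos_iff.mpr (qPochInf_ne_zero hq _ hxq1)
  have hr1 : (0:ℝ) < 1 - ‖q‖ := by linarith
  have hXpos : (0:ℝ) < 1 + ‖x‖ := by positivity
  have hA := norm_qPoch_q_ge hq k
  have hApos : (0:ℝ) < (1 - ‖q‖) ^ k := pow_pos hr1 k
  have hP := norm_tail_ge hq hx m
  have hPpos : (0:ℝ) < ‖qPochInf q (x * q)‖ / (1 + ‖x‖) ^ m := by positivity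
  have hnum : ‖(-1 : ℂ) ^ k * q ^ E * x ^ k * w‖ = ‖q‖ ^ E * ‖x‖ ^ k * ‖w‖ := by
    simp [norm_mul, norm_pow]
  rw [norm_div, norm_mul (qPoch q q k), hnum]
  have hEq : ‖q‖ ^ E ≤ ‖q‖ ^ (k * k) := pow_le_pow_of_le_one (norm_nonneg q) hq.le hE
  calc ‖q‖ ^ E * ‖x‖ ^ k * ‖w‖ / (‖qPoch q q k‖ * ‖qPochInf q (x * q ^ (m + 1))‖)
      ≤ ‖q‖ ^ (k * k) * ‖x‖ ^ k * (2 * (1 + ‖x‖)) /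
        ((1 - ‖q‖) ^ k * (‖qPochInf q (x * q)‖ / (1 + ‖x‖) ^ m)) := by
        gcongr <;> positivity
    _ ≤ ‖q‖ ^ (k * k) * ‖x‖ ^ k * (2 * (1 + ‖x‖)) /
        ((1 - ‖q‖) ^ k * (‖qPochInf q (x * q)‖ / (1 + ‖x‖) ^ (k + 1))) := by
        apply div_le_div_of_nonneg_left (by positivity) (by positivity)
        gcongr
        linarith [norm_nonneg x]
    _ = 2 * (1 + ‖x‖) ^ 2 / ‖qPochInf q (x * q)‖ *
        (‖q‖ ^ (k * k) * (‖x‖ * (1 + ‖x‖) / (1 - ‖q‖)) ^ k) := by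
        rw [div_pow, mul_pow]
        field_simp
        ring

lemma summable_master {r R : ℝ} (hr0 : 0 ≤ r) (hr : r < 1) (hR : 0 ≤ R) :
    Summable (fun k : ℕ => r ^ (k * k) * R ^ k) := by
  have h0 : Tendsto (fun k : ℕ => r ^ k * R) atTop (nhds 0) := by
    simpa using (tendsto_pow_atTop_nhds_zero_of_lt_one hr0 hr).mul_const R
  refine Summable.of_norm_bounded_eventually_nat (g := fun k => (1/2:ℝ) ^ k)
    (summable_geometric_of_lt_one (by norm_num) (by norm_num)) ?_
  filter_upwards [h0.eventually_le_const (by norm_num : (0:ℝ) < 1/2)] with k hk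
  have he : r ^ (k * k) * R ^ k = (r ^ k * R) ^ k := by rw [mul_pow, ← pow_mul]
  rw [Real.norm_of_nonneg (by positivity), he]
  exact pow_le_pow_left₀ (by positivity) hk k

noncomputable def Csyl (q x : ℂ) (k : ℕ) : ℂ :=
  (-1) ^ k * q ^ (k * (3 * k + 1) / 2) * x ^ k * (1 - q ^ k) /
    (qPoch q q k * qPochInf q (x * q ^ (k + 1)))

noncomputable def Dsyl (q x : ℂ) (k : ℕ) : ℂ :=
  (-1) ^ k * q ^ (k * (3 * k + 1) / 2 + k) * x ^ k * 1 /
    (qPoch q q k * qPochInf q (x * q ^ (k + 2)))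

lemma hE_aux (k : ℕ) : k * k ≤ k * (3 * k + 1) / 2 := by
  rw [Nat.le_div_iff_mul_le (by norm_num)]
  nlinarith

lemma summable_bound (hq : ‖q‖ < 1) (hx : ∀ j : ℕ, 1 ≤ j → x * q ^ j ≠ 1) :
    Summable (fun k : ℕ => 2 * (1 + ‖x‖) ^ 2 / ‖qPochInf q (x * q)‖ *
      (‖q‖ ^ (k * k) * (‖x‖ * (1 + ‖x‖) / (1 - ‖q‖)) ^ k)) := by
  have hr1 : (0:ℝ) < 1 - ‖q‖ := by linarith
  exact (summable_master (norm_nonneg q) hq (by positivity)).mul_left _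

lemma summable_norm_F (hq : ‖q‖ < 1) (hx : ∀ j : ℕ, 1 ≤ j → x * q ^ j ≠ 1) :
    Summable (fun k : ℕ => ‖F q x k‖) := by
  refine Summable.of_nonneg_of_le (fun k => norm_nonneg _) (fun k => ?_) (summable_bound hq hx)
  rw [F]
  refine norm_term_le hq hx k k _ (hE_aux k) le_rfl (by omega) _ ?_
  calc ‖1 - x * q ^ (2 * k + 1)‖ ≤ ‖(1:ℂ)‖ + ‖x * q ^ (2 * k + 1)‖ := norm_sub_le _ _
    _ = 1 + ‖x‖ * ‖q‖ ^ (2 * k + 1) := by rw [norm_one, norm_mul, norm_pow]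
    _ ≤ 2 * (1 + ‖x‖) := by
        have h1 : ‖q‖ ^ (2 * k + 1) ≤ 1 := pow_le_one₀ (norm_nonneg q) hq.le
        have h3 := mul_le_mul_of_nonneg_left h1 (norm_nonneg x)
        linarith [norm_nonneg x]

lemma summable_norm_C (hq : ‖q‖ < 1) (hx : ∀ j : ℕ, 1 ≤ j → x * q ^ j ≠ 1) :
    Summable (fun k : ℕ => ‖Csyl q x k‖) := by
  refine Summable.of_nonneg_of_le (fun k => norm_nonneg _) (fun k => ?_) (summable_bound hq hx)
  rw [Csyl]
  refine norm_term_le hq hx k k _ (hE_aux k) le_rfl (by omega) _ ?_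
  calc ‖1 - q ^ k‖ ≤ ‖(1:ℂ)‖ + ‖q ^ k‖ := norm_sub_le _ _
    _ = 1 + ‖q‖ ^ k := by rw [norm_one, norm_pow]
    _ ≤ 2 * (1 + ‖x‖) := by
        have h1 : ‖q‖ ^ k ≤ 1 := pow_le_one₀ (norm_nonneg q) hq.le
        linarith [norm_nonneg x]

lemma summable_norm_D (hq : ‖q‖ < 1) (hx : ∀ j : ℕ, 1 ≤ j → x * q ^ j ≠ 1) :
    Summable (fun k : ℕ => ‖Dsyl q x k‖) := by
  refine Summable.of_nonneg_of_le (fun k => norm_nonneg _) (fun k => ?_) (summable_bound hq hx)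
  rw [Dsyl]
  rw [show k + 2 = (k + 1) + 1 by omega]
  refine norm_term_le hq hx k (k + 1) _ (le_trans (hE_aux k) (by omega)) (by omega) le_rfl _ ?_
  rw [norm_one]
  linarith [norm_nonneg x]

lemma F_eq_C_add_D (hq : ‖q‖ < 1) (hx : ∀ j : ℕ, 1 ≤ j → x * q ^ j ≠ 1) (k : ℕ) :
    F q x k = Csyl q x k + Dsyl q x k := by
  have hA : qPoch q q k ≠ 0 := qPoch_q_ne_zero hq k
  have hB : qPochInf q (x * q ^ (k + 2)) ≠ 0 := tail_ne_zero hq hx (k + 2) (by omega)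
  have hu : (1:ℂ) - x * q ^ (k + 1) ≠ 0 := by
    have := factor_ne hx (k + 1) 0 (by omega)
    rwa [pow_zero, mul_one] at this
  have hsplit : qPochInf q (x * q ^ (k + 1)) =
      (1 - x * q ^ (k + 1)) * qPochInf q (x * q ^ (k + 2)) := by
    have := tail_succ hq hx (k + 1) (by omega)
    rwa [show k + 1 + 1 = k + 2 from rfl] at this
  rw [F, Csyl, Dsyl, hsplit]
  field_simp
  ring

lemma Fq_eq_D_add_C (hq : ‖q‖ < 1) (hx : ∀ j : ℕ, 1 ≤ j → x * q ^ j ≠ 1) (k : ℕ) :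
    F q (x * q) k = Dsyl q x k + Csyl q x (k + 1) := by
  have hA : qPoch q q k ≠ 0 := qPoch_q_ne_zero hq k
  have hB : qPochInf q (x * q ^ (k + 2)) ≠ 0 := tail_ne_zero hq hx (k + 2) (by omega)
  have hv : (1:ℂ) - q * q ^ k ≠ 0 := by
    rw [← pow_succ']
    intro h
    have h1 : q ^ (k + 1) = 1 := by
      have := sub_eq_zero.mp h
      exact this.symm
    have h2 : ‖q ^ (k + 1)‖ < 1 := by
      rw [norm_pow]
      exact pow_lt_one₀ (norm_nonneg q) hq k.succ_ne_zero
    rw [h1, norm_one] at h2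
    exact lt_irrefl _ h2
  have hE : (k + 1) * (3 * (k + 1) + 1) / 2 = k * (3 * k + 1) / 2 + (3 * k + 2) := by
    have h2 : (k + 1) * (3 * (k + 1) + 1) = k * (3 * k + 1) + 2 * (3 * k + 2) := by ring
    rw [h2, Nat.add_mul_div_left _ _ (by norm_num : (0:ℕ) < 2)]
  have harg : x * q * q ^ (k + 1) = x * q ^ (k + 2) := by ring
  have hpoch : qPoch q q (k + 1) = qPoch q q k * (1 - q * q ^ k) := Finset.prod_range_succ _ _
  rw [F, Csyl, Dsyl, hE, harg, hpoch, show k + 1 + 1 = k + 2 from rfl]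
  field_simp
  ring

lemma Csyl_zero : Csyl q x 0 = 0 := by simp [Csyl]

/-- Functional equation for the Sylvester series: `f(x) = f(xq)`. -/
theorem sylvester_functional_equation (q x : ℂ) (hq : ‖q‖ < 1)
    (hx : ∀ j : ℕ, 1 ≤ j → x * q ^ j ≠ 1) :
    Summable (fun k : ℕ => ‖F q x k‖) ∧ sylvesterF q x = sylvesterF q (x * q) := by
  have hC : Summable (Csyl q x) := (summable_norm_C hq hx).of_norm
  have hD : Summable (Dsyl q x) := (summable_norm_D hq hx).of_norm
  have hCshift : Summable (fun k => Csyl q x (k + 1)) := (summable_nat_add_iff 1).2 hC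
  refine ⟨summable_norm_F hq hx, ?_⟩
  calc sylvesterF q x = ∑' k, (Csyl q x k + Dsyl q x k) := tsum_congr (F_eq_C_add_D hq hx)
    _ = (∑' k, Csyl q x k) + ∑' k, Dsyl q x k := hC.tsum_add hD
    _ = (∑' k, Dsyl q x k) + ∑' k, Csyl q x (k + 1) := by
        rw [hC.tsum_eq_zero_add, Csyl_zero, zero_add, add_comm]
    _ = ∑' k, (Dsyl q x k + Csyl q x (k + 1)) := (hD.tsum_add hCshift).symm
    _ = sylvesterF q (x * q) := (tsum_congr (Fq_eq_D_add_C hq hx)).symm
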